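/- arXiv:1711.02195 — 6 statements merged into one kernel-verified Lean document; each statement's English description precedes it below -/
import Mathlib

section
/- Rounding guarantee (edge cut probability, same dominant label): for the rounding algorithm R with ε = 1/(10k), θ = 6/(5k), if vertices u, v have the same dominant label j, then the probability that u and v receive different labels is at most (5/3)·d(u,v), where d(u,v) = (1/2)‖ū − v̄‖₁. -/
open Finset MeasureTheory

variable {L : Type*}

/-- `x` is a probability vector over the labels `L`. -/
def IsProbVec [Fintype L] (x : L → ℝ) : Prop :=
  (∀ i, 0 ≤ x i) ∧ ∑ i, x i = 1

/-- Half the ℓ₁ distance between two label vectors. -/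
noncomputable def dL1 [Fintype L] (x y : L → ℝ) : ℝ :=
  (1 / 2) * ∑ i, |x i - y i|

/-- Probability of an event under the randomness of the rounding algorithm:
`r` uniform in `(0, θ)` and a label `i` uniform in `L`, independently. -/
noncomputable def Pr [Fintype L] (θ : ℝ) (ev : ℝ → L → Prop) : ℝ :=
  (1 / (Fintype.card L : ℝ)) *
    ∑ i, (volume {r : ℝ | r ∈ Set.Ioo 0 θ ∧ ev r i}).toReal / θ

/-- The label assigned to a vertex with LP vector `x` and dominant label `j`
by the rounding algorithm on randomness `(r, i)`. -/
noncomputable def assign (x : L → ℝ) (j : L) (r : ℝ) (i : L) : L :=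
  if x i < r then j else i

/-- Rounding guarantee (same dominant label): if `u, v` share dominant label `j`,
the probability they receive different labels is at most `(5/3)·d(u,v)`. -/
theorem rounding_cut_prob_same_dominant [Fintype L] [DecidableEq L]
    (x y : L → ℝ) (hx : IsProbVec x) (hy : IsProbVec y) (j : L)
    (hxj : x j ≥ 1 - 1 / (10 * (Fintype.card L : ℝ)))
    (hyj : y j ≥ 1 - 1 / (10 * (Fintype.card L : ℝ))) :
    Pr (6 / (5 * (Fintype.card L : ℝ)))
        (fun r i' => assign x j r i' ≠ assign y j r i')
      ≤ 5 / 3 * dL1 x y := by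
  classical
  have hne : Nonempty L := ⟨j⟩
  have hk1 : (1:ℝ) ≤ (Fintype.card L : ℝ) := by exact_mod_cast Fintype.card_pos
  have hkpos : (0:ℝ) < (Fintype.card L : ℝ) := lt_of_lt_of_le one_pos hk1
  set k : ℝ := (Fintype.card L : ℝ) with hk
  set θ : ℝ := 6 / (5 * k) with hθ
  have hθpos : 0 < θ := by positivity
  have key : ∀ i : L,
      (volume {r : ℝ | r ∈ Set.Ioo 0 θ ∧
          assign x j r i ≠ assign y j r i}).toReal ≤ |x i - y i| := by
    intro i
    have hsub : {r : ℝ | r ∈ Set.Ioo 0 θ ∧ assign x j r i ≠ assign y j r i}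
        ⊆ Set.Ioc (min (x i) (y i)) (max (x i) (y i)) := by
      intro r hr
      obtain ⟨-, hne'⟩ := hr
      unfold assign at hne'
      by_cases h1 : x i < r <;> by_cases h2 : y i < r <;>
        simp [h1, h2] at hne'
      · exact Set.mem_Ioc.mpr ⟨lt_of_le_of_lt (min_le_left _ _) h1,
          le_trans (not_lt.mp h2) (le_max_right _ _)⟩
      · exact Set.mem_Ioc.mpr ⟨lt_of_le_of_lt (min_le_right _ _) h2,
          le_trans (not_lt.mp h1) (le_max_left _ _)⟩
    calc (volume {r : ℝ | r ∈ Set.Ioo 0 θ ∧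
            assign x j r i ≠ assign y j r i}).toReal
        ≤ (volume (Set.Ioc (min (x i) (y i)) (max (x i) (y i)))).toReal := by
          refine ENNReal.toReal_mono ?_ (measure_mono hsub)
          rw [Real.volume_Ioc]
          exact ENNReal.ofReal_ne_top
      _ = |x i - y i| := by
          rw [Real.volume_Ioc, ENNReal.toReal_ofReal
            (by simp [sub_nonneg, min_le_max]), max_sub_min_eq_abs, abs_sub_comm]
  have hstep : Pr θ (fun r i' => assign x j r i' ≠ assign y j r i')
      ≤ (1 / k) * ∑ i, |x i - y i| / θ := by
    unfold Pr
    rw [← hk]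
    gcongr with i
    exact key i
  refine hstep.trans (le_of_eq ?_)
  rw [← Finset.sum_div]
  unfold dL1
  rw [hθ]
  have hkne : k ≠ 0 := ne_of_gt hkpos
  field_simp
  ring
end

section
/- Rounding guarantee (edge non-cut probability, distinct dominant labels): if u, v have distinct dominant labels j(u) ≠ j(v), then under the rounding algorithm R, the probability that u and v receive the same label is at least (5/6)·(1 − d(u,v)). -/
open Finset MeasureTheory

variable {L : Type*}

/-- Rounding guarantee (distinct dominant labels): if `u, v` have distinct
dominant labels, the probability they receive the same label is at least
`(5/6)·(1 − d(u,v))`. -/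
theorem rounding_uncut_prob_distinct_dominant [Fintype L] [DecidableEq L]
    (x y : L → ℝ) (hx : IsProbVec x) (hy : IsProbVec y) (ju jv : L) (hj : ju ≠ jv)
    (hxj : x ju ≥ 1 - 1 / (10 * (Fintype.card L : ℝ)))
    (hyj : y jv ≥ 1 - 1 / (10 * (Fintype.card L : ℝ))) :
    Pr (6 / (5 * (Fintype.card L : ℝ)))
        (fun r i' => assign x ju r i' = assign y jv r i')
      ≥ 5 / 6 * (1 - dL1 x y) := by
  classical
  have hk0 : 0 < (Fintype.card L : ℝ) := by
    have : 0 < Fintype.card L := Fintype.card_pos_iff.mpr ⟨ju⟩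
    exact_mod_cast this
  set k : ℝ := (Fintype.card L : ℝ) with hkdef
  set θ : ℝ := 6 / (5 * k) with hθdef
  have hθ0 : 0 < θ := by positivity
  have hε : (1 : ℝ) / (10 * k) < θ := by
    rw [hθdef, div_lt_div_iff₀ (by positivity) (by positivity)]
    nlinarith
  have hmle : ∀ i, min (x i) (y i) ≤ 1 / (10 * k) := by
    intro i
    by_cases h : i = ju
    · rw [h]
      have h1 : y ju + y jv ≤ 1 := by
        have := Finset.sum_le_sum_of_subset_of_nonneg
          (Finset.subset_univ ({ju, jv} : Finset L)) (fun j _ _ => hy.1 j)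
        rwa [Finset.sum_pair hj, hy.2] at this
      calc min (x ju) (y ju) ≤ y ju := min_le_right _ _
        _ ≤ 1 - y jv := by linarith
        _ ≤ 1 / (10 * k) := by linarith [hyj]
    · have h1 : x ju + x i ≤ 1 := by
        have := Finset.sum_le_sum_of_subset_of_nonneg
          (Finset.subset_univ ({ju, i} : Finset L)) (fun j _ _ => hx.1 j)
        rwa [Finset.sum_pair (Ne.symm h), hx.2] at this
      calc min (x i) (y i) ≤ x i := min_le_left _ _
        _ ≤ 1 - x ju := by linarith
        _ ≤ 1 / (10 * k) := by linarith [hxj]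
  have hm0 : ∀ i, 0 ≤ min (x i) (y i) := fun i => le_min (hx.1 i) (hy.1 i)
  have hmeas : ∀ i, min (x i) (y i) ≤
      (volume {r : ℝ | r ∈ Set.Ioo 0 θ ∧ assign x ju r i = assign y jv r i}).toReal := by
    intro i
    have hsub : Set.Ioc 0 (min (x i) (y i)) ⊆
        {r : ℝ | r ∈ Set.Ioo 0 θ ∧ assign x ju r i = assign y jv r i} := by
      intro r hr
      obtain ⟨hr0, hr1⟩ := hr
      have hrθ : r < θ := lt_of_le_of_lt (hr1.trans (hmle i)) hε
      refine ⟨⟨hr0, hrθ⟩, ?_⟩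
      have hx' : ¬ x i < r := not_lt.2 (hr1.trans (min_le_left _ _))
      have hy' : ¬ y i < r := not_lt.2 (hr1.trans (min_le_right _ _))
      simp [assign, hx', hy']
    have hfin : volume {r : ℝ | r ∈ Set.Ioo 0 θ ∧ assign x ju r i = assign y jv r i} ≠ ⊤ := by
      have hss : {r : ℝ | r ∈ Set.Ioo 0 θ ∧ assign x ju r i = assign y jv r i}
          ⊆ Set.Ioo (0:ℝ) θ := fun r hr => hr.1
      have hle := measure_mono (μ := (volume : Measure ℝ)) hss
      exact (lt_of_le_of_lt hle measure_Ioo_lt_top).ne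
    have hmono := measure_mono (μ := (volume : Measure ℝ)) hsub
    rw [Real.volume_Ioc, sub_zero] at hmono
    calc min (x i) (y i) = (ENNReal.ofReal (min (x i) (y i))).toReal := by
          rw [ENNReal.toReal_ofReal (hm0 i)]
      _ ≤ _ := ENNReal.toReal_mono hfin hmono
  have hsum : ∑ i, min (x i) (y i) = 1 - dL1 x y := by
    have hmin : ∀ i, min (x i) (y i) = (x i + y i - |x i - y i|) / 2 := by
      intro i
      rcases le_total (x i) (y i) with h | h
      · rw [min_eq_left h, abs_of_nonpos (by linarith)]; ring
      · rw [min_eq_right h, abs_of_nonneg (by linarith)]; ring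
    simp_rw [hmin]
    rw [← Finset.sum_div, Finset.sum_sub_distrib, Finset.sum_add_distrib, hx.2, hy.2, dL1]
    ring
  have hPr : Pr θ (fun r i' => assign x ju r i' = assign y jv r i')
      ≥ (1 / k) * ∑ i, min (x i) (y i) / θ := by
    unfold Pr
    rw [← hkdef]
    apply mul_le_mul_of_nonneg_left _ (by positivity)
    apply Finset.sum_le_sum
    intro i _
    gcongr
    exact hmeas i
  have hk : k ≠ 0 := ne_of_gt hk0
  calc Pr θ (fun r i' => assign x ju r i' = assign y jv r i')
      ≥ (1 / k) * ∑ i, min (x i) (y i) / θ := hPr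
    _ = 5 / 6 * (1 - dL1 x y) := by
        rw [← Finset.sum_div, hsum, hθdef]
        field_simp
end

section
/- Sufficiency of the adversarial perturbation: for the adversarial (β,γ)-perturbation w' (defined by w'(u,v) = w(u,v)/β on edges not cut by g, and w'(u,v) = γ·w(u,v) on edges cut by g), any labeling h and any (β,γ)-perturbation w* satisfy Q*(g) − Q*(h) ≤ Q'(g) − Q'(h). Consequently, if Q*(h) ≤ Q*(g) for some (β,γ)-perturbation w*, then Q'(h) ≤ Q'(g). -/
open Finset

variable {V L : Type*}

/-- `w'` is a `(β,γ)`-perturbation of `w` on edge set `E`. -/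
def IsPerturbation (E : Finset (V × V)) (β γ : ℝ) (w w' : V × V → ℝ) : Prop :=
  ∀ e ∈ E, w e / β ≤ w' e ∧ w' e ≤ γ * w e

/-- The Uniform Metric Labeling objective. -/
def Q [Fintype V] [DecidableEq L] (E : Finset (V × V)) (c : V → L → ℝ)
    (w : V × V → ℝ) (g : V → L) : ℝ :=
  ∑ u, c u (g u) + ∑ e ∈ E.filter (fun e => g e.1 ≠ g e.2), w e

/-- `(β,γ)`-stability: `g` is the unique optimum under every `(β,γ)`-perturbation. -/
def IsStable [Fintype V] [DecidableEq L] (E : Finset (V × V)) (c : V → L → ℝ)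
    (w : V × V → ℝ) (β γ : ℝ) (g : V → L) : Prop :=
  ∀ w', IsPerturbation E β γ w w' → ∀ h : V → L, h ≠ g → Q E c w' g < Q E c w' h

/-- `(β,γ,S)`-weak stability. -/
def IsWeaklyStable [Fintype V] [DecidableEq L] (E : Finset (V × V)) (c : V → L → ℝ)
    (w : V × V → ℝ) (β γ : ℝ) (S : Set V) (g : V → L) : Prop :=
  ∀ w', IsPerturbation E β γ w w' →
    ∀ h : V → L, (∃ u ∈ S, h u ≠ g u) → Q E c w' g < Q E c w' h

/-- The adversarial `(β,γ)`-perturbation with respect to labeling `g`: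
weight `γ·w` on edges cut by `g`, weight `w/β` on uncut edges. -/
noncomputable def advPerturb [DecidableEq L] (β γ : ℝ) (w : V × V → ℝ) (g : V → L) : V × V → ℝ :=
  fun e => if g e.1 ≠ g e.2 then γ * w e else w e / β

/-- Sufficiency of the adversarial perturbation: it maximizes `Q(g) − Q(h)`
among all `(β,γ)`-perturbations; hence any stability violation in some
perturbation is also a violation in the adversarial one. -/
theorem advPerturb_sufficient [Fintype V] [DecidableEq L]
    (E : Finset (V × V)) (c : V → L → ℝ) (w : V × V → ℝ)
    (hc : ∀ u i, 0 ≤ c u i) (hw : ∀ e ∈ E, 0 ≤ w e)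
    (β γ : ℝ) (hβ : 1 ≤ β) (hγ : 1 ≤ γ)
    (g h : V → L) (w' : V × V → ℝ) (hpert : IsPerturbation E β γ w w') :
    Q E c w' g - Q E c w' h ≤ Q E c (advPerturb β γ w g) g - Q E c (advPerturb β γ w g) h ∧
    (Q E c w' h ≤ Q E c w' g → Q E c (advPerturb β γ w g) h ≤ Q E c (advPerturb β γ w g) g) := by
  have hβ0 : 0 < β := zero_lt_one.trans_le hβ
  have hsum : ∑ e ∈ E, ((if g e.1 ≠ g e.2 then w' e else 0) - (if h e.1 ≠ h e.2 then w' e else 0))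
      ≤ ∑ e ∈ E, ((if g e.1 ≠ g e.2 then advPerturb β γ w g e else 0)
        - (if h e.1 ≠ h e.2 then advPerturb β γ w g e else 0)) := by
    apply Finset.sum_le_sum
    intro e he
    obtain ⟨h1, h2⟩ := hpert e he
    simp only [advPerturb]
    by_cases hg : g e.1 ≠ g e.2 <;> by_cases hh : h e.1 ≠ h e.2 <;> simp [hg, hh] <;> linarith
  rw [Finset.sum_sub_distrib, Finset.sum_sub_distrib,
    ← Finset.sum_filter, ← Finset.sum_filter, ← Finset.sum_filter, ← Finset.sum_filter] at hsum
  have key : Q E c w' g - Q E c w' h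
      ≤ Q E c (advPerturb β γ w g) g - Q E c (advPerturb β γ w g) h := by
    simp only [Q]
    linarith
  exact ⟨key, fun hle => by linarith⟩
end

section
/- An instance is (β,γ)-stable if and only if its optimal solution g is the unique optimum under the single adversarial perturbation w' given by w'(u,v) = w(u,v)/β for (u,v) ∉ E_g and w'(u,v) = γ·w(u,v) for (u,v) ∈ E_g. -/
open Finset

variable {V L : Type*}

/-- An instance is `(β,γ)`-stable iff its optimal solution `g` is the unique
optimum under the single adversarial perturbation. -/
theorem isStable_iff_advPerturb [Fintype V] [DecidableEq L]
    (E : Finset (V × V)) (c : V → L → ℝ) (w : V × V → ℝ)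
    (hc : ∀ u i, 0 ≤ c u i) (hw : ∀ e ∈ E, 0 ≤ w e)
    (β γ : ℝ) (hβ : 1 ≤ β) (hγ : 1 ≤ γ) (g : V → L) :
    IsStable E c w β γ g ↔
      ∀ h : V → L, h ≠ g →
        Q E c (advPerturb β γ w g) g < Q E c (advPerturb β γ w g) h := by
  constructor
  · intro hs h hne
    apply hs
    · intro e he
      have hwe := hw e he
      have h1 : w e / β ≤ w e := div_le_self hwe hβ
      have h2 : w e ≤ γ * w e := le_mul_of_one_le_left hwe hγ
      unfold advPerturb
      split_ifs
      · exact ⟨h1.trans h2, le_refl _⟩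
      · exact ⟨le_refl _, h1.trans h2⟩
    · exact hne
  · intro hadv w' hw' h hne
    have key := hadv h hne
    have hsum : ∑ e ∈ E.filter (fun e => g e.1 ≠ g e.2), w' e
        - ∑ e ∈ E.filter (fun e => h e.1 ≠ h e.2), w' e
        ≤ ∑ e ∈ E.filter (fun e => g e.1 ≠ g e.2), advPerturb β γ w g e
        - ∑ e ∈ E.filter (fun e => h e.1 ≠ h e.2), advPerturb β γ w g e := by
      rw [Finset.sum_filter, Finset.sum_filter, Finset.sum_filter, Finset.sum_filter,
        ← Finset.sum_sub_distrib, ← Finset.sum_sub_distrib]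
      apply Finset.sum_le_sum
      intro e he
      obtain ⟨hl, hr⟩ := hw' e he
      have hwe := hw e he
      have h1 : w e / β ≤ w e := div_le_self hwe hβ
      have h2 : w e ≤ γ * w e := le_mul_of_one_le_left hwe hγ
      unfold advPerturb
      split_ifs <;> simp <;> linarith
    unfold Q at key ⊢
    linarith
end

section
/- The four-node path instance u–v–w–x with edge weights w(u,v)=4, w(v,w)=3, w(w,x)=3, labels {1,2,3}, and node costs c(u,1)=2, c(v,3)=100, c(w,2)=100, c(x,1)=100 (all others 0) has unique optimal labeling g(u)=g(v)=2, g(w)=g(x)=3 with objective 3, and the labeling h(u)=h(v)=h(w)=1, h(x)=2 with objective 5 is a local optimum with respect to expansion moves: no α-expansion of h strictly decreases the objective. -/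
open Finset

variable {V L : Type*}

/-- `g` is an `α`-expansion of `f`: the class of `α` weakly grows and every other
label class weakly shrinks. -/
def IsExpansion {V L : Type*} (f g : V → L) (α : L) : Prop :=
  (∀ v, f v = α → g v = α) ∧ ∀ v, ∀ i, i ≠ α → g v = i → f v = i

private def E₀ : Finset (Fin 4 × Fin 4) := {(0, 1), (1, 2), (2, 3)}
private def w₀ : Fin 4 × Fin 4 → ℝ := fun e =>
  if e = (0, 1) then 4 else if e = (1, 2) then 3 else if e = (2, 3) then 3 else 0
private def c₀ : Fin 4 → Fin 3 → ℝ := fun u i =>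
  if u = 0 ∧ i = 0 then 2 else if u = 1 ∧ i = 2 then 100 else
  if u = 2 ∧ i = 1 then 100 else if u = 3 ∧ i = 0 then 100 else 0

set_option maxHeartbeats 1000000 in
private lemma aux2 : Q E₀ c₀ w₀ ![1, 1, 2, 2] = 3 := by
  simp [Q, E₀, c₀, w₀, Fin.sum_univ_four, Finset.sum_filter]

set_option maxHeartbeats 1000000 in
private lemma aux3 : Q E₀ c₀ w₀ ![0, 0, 0, 1] = 5 := by
  simp [Q, E₀, c₀, w₀, Fin.sum_univ_four, Finset.sum_filter]; norm_num

set_option maxHeartbeats 1000000 in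
private lemma aux1 : ∀ f : Fin 4 → Fin 3, f ≠ ![1, 1, 2, 2] →
    Q E₀ c₀ w₀ ![1, 1, 2, 2] < Q E₀ c₀ w₀ f := by
  intro f hf
  obtain h0|h0|h0 : f 0 = 0 ∨ f 0 = 1 ∨ f 0 = 2 := by omega
  all_goals obtain h1|h1|h1 : f 1 = 0 ∨ f 1 = 1 ∨ f 1 = 2 := by omega
  all_goals obtain h2|h2|h2 : f 2 = 0 ∨ f 2 = 1 ∨ f 2 = 2 := by omega
  all_goals obtain h3|h3|h3 : f 3 = 0 ∨ f 3 = 1 ∨ f 3 = 2 := by omega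
  all_goals first
  | ((simp [Q, h0, h1, h2, h3, E₀, c₀, w₀, Fin.sum_univ_four, Finset.sum_filter] <;> norm_num); done)
  | exact absurd (funext fun i => by fin_cases i <;> simp_all) hf

set_option maxHeartbeats 1000000 in
private lemma aux4 : ∀ α : Fin 3, ∀ h' : Fin 4 → Fin 3,
    IsExpansion ![0, 0, 0, 1] h' α → Q E₀ c₀ w₀ ![0, 0, 0, 1] ≤ Q E₀ c₀ w₀ h' := by
  intro α h' hex
  have k0 : h' 0 = α ∨ h' 0 = 0 := or_iff_not_imp_left.2 fun hne => by
    simpa using (hex.2 0 _ hne rfl).symm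
  have k1 : h' 1 = α ∨ h' 1 = 0 := or_iff_not_imp_left.2 fun hne => by
    simpa using (hex.2 1 _ hne rfl).symm
  have k2 : h' 2 = α ∨ h' 2 = 0 := or_iff_not_imp_left.2 fun hne => by
    simpa using (hex.2 2 _ hne rfl).symm
  have k3 : h' 3 = α ∨ h' 3 = 1 := or_iff_not_imp_left.2 fun hne => by
    simpa using (hex.2 3 _ hne rfl).symm
  obtain ha|ha|ha : α = 0 ∨ α = 1 ∨ α = 2 := by omega
  all_goals subst ha
  all_goals (
    obtain k0|k0 := k0 <;> obtain k1|k1 := k1 <;> obtain k2|k2 := k2 <;> obtain k3|k3 := k3 <;>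
    simp [Q, k0, k1, k2, k3, E₀, c₀, w₀, Fin.sum_univ_four, Finset.sum_filter] <;> norm_num)


/-- The four-node path counterexample: a `(2,1)`-stable instance where the
labeling `h` (objective `5`) is locally optimal for expansion moves, while the
unique global optimum `g` has objective `3`. -/
theorem alpha_expansion_counterexample :
    let E : Finset (Fin 4 × Fin 4) := {(0, 1), (1, 2), (2, 3)}
    let w : Fin 4 × Fin 4 → ℝ := fun e =>
      if e = (0, 1) then 4 else if e = (1, 2) then 3 else if e = (2, 3) then 3 else 0
    let c : Fin 4 → Fin 3 → ℝ := fun u i =>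
      if u = 0 ∧ i = 0 then 2 else if u = 1 ∧ i = 2 then 100 else
      if u = 2 ∧ i = 1 then 100 else if u = 3 ∧ i = 0 then 100 else 0
    let g : Fin 4 → Fin 3 := ![1, 1, 2, 2]
    let h : Fin 4 → Fin 3 := ![0, 0, 0, 1]
    (∀ f : Fin 4 → Fin 3, f ≠ g → Q E c w g < Q E c w f) ∧
    Q E c w g = 3 ∧
    Q E c w h = 5 ∧
    (∀ α : Fin 3, ∀ h' : Fin 4 → Fin 3, IsExpansion h h' α → Q E c w h ≤ Q E c w h') := by
  exact ⟨aux1, aux2, aux3, aux4⟩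
end

section
/- If a Uniform Metric Labeling instance is (1,2,S)-weakly-stable with optimal solution g, and f is any labeling that is locally optimal with respect to expansion moves (no α-expansion of f strictly decreases the objective Q), then f agrees with g on S. -/
open Finset

variable {V L : Type*}

lemma edge_aux {L : Type*} [DecidableEq L] [Fintype L] (a b p q : L) (wv : ℝ) (h0 : 0 ≤ wv) :
    ∑ α : L, ((if (if p = α then α else a) ≠ (if q = α then α else b) then wv else 0)
      - (if a ≠ b then wv else 0))
    ≤ (if p ≠ q then (if a ≠ b then wv else 2 * wv) else 0)
      - (if a ≠ b then (if a ≠ b then wv else 2 * wv) else 0) := by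
  by_cases hpq : p = q
  · subst hpq
    have hfun : ∀ α : L, ((if (if p = α then α else a) ≠ (if p = α then α else b) then wv else 0)
        - (if a ≠ b then wv else 0)) = if p = α then -(if a ≠ b then wv else 0) else 0 := by
      intro α
      by_cases h1 : p = α <;> simp [h1]
    rw [Finset.sum_congr rfl (fun α _ => hfun α), Finset.sum_ite_eq]
    simp only [Finset.mem_univ, if_true, ne_eq, not_true_eq_false, if_false]
    split_ifs <;> linarith
  · have hfun : ∀ α : L, ((if (if p = α then α else a) ≠ (if q = α then α else b) then wv else 0)
        - (if a ≠ b then wv else 0))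
        = (if p = α then ((if α ≠ b then wv else 0) - (if a ≠ b then wv else 0)) else 0)
          + (if q = α then ((if a ≠ α then wv else 0) - (if a ≠ b then wv else 0)) else 0) := by
      intro α
      by_cases h1 : p = α <;> by_cases h2 : q = α
      · exact absurd (h1.trans h2.symm) hpq
      · simp [h1, h2]
      · simp [h1, h2]
      · simp [h1, h2]
    rw [Finset.sum_congr rfl (fun α _ => hfun α), Finset.sum_add_distrib,
      Finset.sum_ite_eq, Finset.sum_ite_eq]
    simp only [Finset.mem_univ, if_true, ne_eq, hpq, not_false_eq_true, if_true]
    split_ifs <;> linarith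


/-- On a `(1,2,S)`-weakly-stable instance with optimal solution `g`, any labeling
`f` that is locally optimal with respect to expansion moves agrees with `g` on
the stable set `S`. -/
theorem expansion_local_opt_agrees_on_stable_set
    [Fintype V] [Fintype L] [DecidableEq L] [Nonempty L]
    (E : Finset (V × V)) (c : V → L → ℝ) (w : V × V → ℝ)
    (hc : ∀ u i, 0 ≤ c u i) (hw : ∀ e ∈ E, 0 ≤ w e)
    (S : Set V) (g : V → L)
    (hstable : IsWeaklyStable E c w 1 2 S g)
    (f : V → L)
    (hlocal : ∀ α : L, ∀ h : V → L, IsExpansion f h α → Q E c w f ≤ Q E c w h) :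
    ∀ u ∈ S, f u = g u := by
  intro u hu
  by_contra hne
  classical
  set w' : V × V → ℝ := fun e => if f e.1 ≠ f e.2 then w e else 2 * w e with hw'def
  have hpert : IsPerturbation E 1 2 w w' := by
    intro e he
    have h0 := hw e he
    simp only [hw'def]
    split_ifs <;> (rw [div_one]; constructor <;> linarith)
  -- the expansion moves
  set hA : L → V → L := fun α v => if g v = α then α else f v with hAdef
  have hexp : ∀ α, IsExpansion f (hA α) α := by
    intro α
    constructor
    · intro v hv
      simp only [hAdef]
      split_ifs with h1
      · rfl
      · exact hv
    · intro v i hi hgi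
      simp only [hAdef] at hgi
      split_ifs at hgi with h1
      · exact absurd hgi.symm hi
      · exact hgi
  have hrw : ∀ (W : V × V → ℝ) (F : V → L), Q E c W F
      = ∑ v, c v (F v) + ∑ e ∈ E, (if F e.1 ≠ F e.2 then W e else 0) := by
    intro W F
    rw [Q, Finset.sum_filter]
  have hsum0 : (0:ℝ) ≤ ∑ α : L, (Q E c w (hA α) - Q E c w f) := by
    apply Finset.sum_nonneg
    intro α _
    have := hlocal α (hA α) (hexp α)
    linarith
  -- split the sum
  have hvert : ∀ v, ∑ α : L, (c v (hA α v) - c v (f v)) = c v (g v) - c v (f v) := by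
    intro v
    have h1 : ∀ α : L, c v (hA α v) - c v (f v)
        = if g v = α then c v (g v) - c v (f v) else 0 := by
      intro α
      simp only [hAdef]
      split_ifs with h2
      · rw [← h2]
      · ring
    rw [Finset.sum_congr rfl (fun α _ => h1 α), Finset.sum_ite_eq]
    simp
  have hsplit : ∑ α : L, (Q E c w (hA α) - Q E c w f)
      = ∑ v, (c v (g v) - c v (f v))
        + ∑ e ∈ E, ∑ α : L, ((if hA α e.1 ≠ hA α e.2 then w e else 0)
            - (if f e.1 ≠ f e.2 then w e else 0)) := by
    calc ∑ α : L, (Q E c w (hA α) - Q E c w f)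
        = ∑ α : L, ((∑ v, (c v (hA α v) - c v (f v)))
            + ∑ e ∈ E, ((if hA α e.1 ≠ hA α e.2 then w e else 0)
              - (if f e.1 ≠ f e.2 then w e else 0))) := by
          refine Finset.sum_congr rfl fun α _ => ?_
          rw [hrw w (hA α), hrw w f, Finset.sum_sub_distrib, Finset.sum_sub_distrib]
          ring
      _ = (∑ α : L, ∑ v, (c v (hA α v) - c v (f v)))
            + ∑ α : L, ∑ e ∈ E, ((if hA α e.1 ≠ hA α e.2 then w e else 0)
              - (if f e.1 ≠ f e.2 then w e else 0)) := Finset.sum_add_distrib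
      _ = (∑ v, ∑ α : L, (c v (hA α v) - c v (f v)))
            + ∑ e ∈ E, ∑ α : L, ((if hA α e.1 ≠ hA α e.2 then w e else 0)
              - (if f e.1 ≠ f e.2 then w e else 0)) := by
          rw [Finset.sum_comm (s := Finset.univ) (t := Finset.univ),
            Finset.sum_comm (s := Finset.univ) (t := E)]
      _ = _ := by rw [Finset.sum_congr rfl (fun v _ => hvert v)]
  have hedge : ∀ e ∈ E, ∑ α : L, ((if hA α e.1 ≠ hA α e.2 then w e else 0)
      - (if f e.1 ≠ f e.2 then w e else 0))
      ≤ (if g e.1 ≠ g e.2 then w' e else 0) - (if f e.1 ≠ f e.2 then w' e else 0) := by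
    intro e he
    have h0 := hw e he
    have := edge_aux (f e.1) (f e.2) (g e.1) (g e.2) (w e) h0
    simpa [hAdef, hw'def] using this
  have hkey : Q E c w' f ≤ Q E c w' g := by
    have h1 : ∑ v, (c v (g v) - c v (f v))
        + ∑ e ∈ E, ∑ α : L, ((if hA α e.1 ≠ hA α e.2 then w e else 0)
            - (if f e.1 ≠ f e.2 then w e else 0))
        ≤ ∑ v, (c v (g v) - c v (f v))
        + ∑ e ∈ E, ((if g e.1 ≠ g e.2 then w' e else 0)
            - (if f e.1 ≠ f e.2 then w' e else 0)) := by
      have := Finset.sum_le_sum hedge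
      linarith
    have h2 : Q E c w' g - Q E c w' f
        = ∑ v, (c v (g v) - c v (f v))
          + ∑ e ∈ E, ((if g e.1 ≠ g e.2 then w' e else 0)
            - (if f e.1 ≠ f e.2 then w' e else 0)) := by
      rw [hrw w' g, hrw w' f, Finset.sum_sub_distrib, Finset.sum_sub_distrib]
      ring
    rw [hsplit] at hsum0
    linarith
  have := hstable w' hpert f ⟨u, hu, hne⟩
  linarith
end
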